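/- arXiv:1908.07019 — 2 statements merged into one kernel-verified Lean document; each statement's English description precedes it below -/
import Mathlib

section
/- Let (r,a,c) and (s,b,d) be two rank one data. Then: (a) for every i ∈ Z/fZ, p^f − 1 divides Σ_{j=0}^{f−1} p^j·r_{i−j} and divides Σ_{j=0}^{f−1} p^j·s_{i−j}; write α_i(r) := (Σ_{j=0}^{f−1} p^j·r_{i−j})/(p^f − 1) and α_i(s) := (Σ_{j=0}^{f−1} p^j·s_{i−j})/(p^f − 1). (b) dim_F ker ∂ ≤ 1. (c) ker ∂ ≠ 0 if and only if all of the following hold: Π_{i=0}^{f−1} a_i = Π_{i=0}^{f−1} b_i; c_0 − α_0(r) = d_0 − α_0(s) in Z/mZ; and α_i(r) ≥ α_i(s) for all i. (This is the paper's criterion that there is a nonzero morphism M(r,a,c) → M(s,b,d) if and only if the associated Galois characters agree and α_i(M) ≥ α_i(N) for each i.) -/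
open PowerSeries

noncomputable section

/-- The map `φ : Σ αₙ uⁿ ↦ Σ αₙ u^{p·n}` on `F⟦u⟧`. -/
noncomputable def phiPS (p : ℕ) (F : Type) [CommRing F] :
    PowerSeries F →ₗ[F] PowerSeries F where
  toFun g := PowerSeries.mk fun n => if p ∣ n then PowerSeries.coeff (R := F) (n / p) g else 0
  map_add' g h := by
    ext n
    by_cases hn : p ∣ n <;> simp [PowerSeries.coeff_mk, hn]
  map_smul' t g := by
    ext n
    by_cases hn : p ∣ n <;> simp [PowerSeries.coeff_mk, hn]

/-- The space of tuples `(μ_i)_{i ∈ ℤ/f}` of power series such that every nonzero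
coefficient of `μ_i` occurs in a degree `n` with `n ≡ γ i (mod m)`. -/
def Ctuples (F : Type) [Field F] (f m : ℕ) (γ : ZMod f → ZMod m) :
    Submodule F (ZMod f → PowerSeries F) where
  carrier := {μ | ∀ (i : ZMod f) (n : ℕ), PowerSeries.coeff (R := F) n (μ i) ≠ 0 → (n : ZMod m) = γ i}
  add_mem' := by
    intro μ ν hμ hν i n hn
    rw [Pi.add_apply, map_add] at hn
    by_cases h1 : PowerSeries.coeff (R := F) n (μ i) = 0
    · refine hν i n fun h2 => hn ?_
      rw [h1, h2, add_zero]
    · exact hμ i n h1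
  zero_mem' := by
    intro i n hn
    simp at hn
  smul_mem' := by
    intro t μ hμ i n hn
    refine hμ i n fun h => hn ?_
    rw [Pi.smul_apply, map_smul, h, smul_zero]

/-- The map `∂ : (μ_i)_i ↦ (−a_i u^{r_i} μ_i + b_i u^{s_i} φ(μ_{i−1}))_i`. -/
noncomputable def Dmap (p : ℕ) (F : Type) [Field F] (f : ℕ) (r s : ZMod f → ℕ)
    (a b : ZMod f → Fˣ) :
    (ZMod f → PowerSeries F) →ₗ[F] (ZMod f → PowerSeries F) :=
  LinearMap.pi fun i =>
    (LinearMap.mulLeft F (PowerSeries.C (R := F) (b i : F) * PowerSeries.X ^ s i)).comp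
        ((phiPS p F).comp (LinearMap.proj (i - 1)))
      - (LinearMap.mulLeft F (PowerSeries.C (R := F) (a i : F) * PowerSeries.X ^ r i)).comp
        (LinearMap.proj i)

lemma coeff_phiPS (p : ℕ) (F : Type) [CommRing F] (n : ℕ) (g : PowerSeries F) :
    coeff (R := F) n (phiPS p F g) = if p ∣ n then coeff (R := F) (n / p) g else 0 := by
  simp [phiPS, coeff_mk]

lemma phiPS_monomial (p : ℕ) (hp : 0 < p) (F : Type) [CommRing F] (k : ℕ) (x : F) :
    phiPS p F (monomial (R := F) k x) = monomial (R := F) (p * k) x := by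
  ext n
  rw [coeff_phiPS, coeff_monomial]
  by_cases hn : p ∣ n
  · rw [if_pos hn, coeff_monomial]
    obtain ⟨t, rfl⟩ := hn
    rw [Nat.mul_div_cancel_left _ hp]
    by_cases ht : t = k
    · simp [ht]
    · rw [if_neg ht, if_neg (fun h : p * t = p * k => ht (Nat.eq_of_mul_eq_mul_left hp h))]
  · rw [if_neg hn, coeff_monomial, if_neg (fun h : n = p * k => hn (h ▸ ⟨k, rfl⟩))]

lemma phiPS_eq_zero_iff (p : ℕ) (hp : 0 < p) (F : Type) [CommRing F] (g : PowerSeries F) :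
    phiPS p F g = 0 ↔ g = 0 := by
  constructor
  · intro h
    ext n
    have := congrArg (coeff (R := F) (p * n)) h
    rw [coeff_phiPS, if_pos ⟨n, rfl⟩, Nat.mul_div_cancel_left _ hp] at this
    simpa using this
  · rintro rfl; simp

lemma Dmap_apply (p : ℕ) (F : Type) [Field F] (f : ℕ) (r s : ZMod f → ℕ)
    (a b : ZMod f → Fˣ) (μ : ZMod f → PowerSeries F) (i : ZMod f) :
    Dmap p F f r s a b μ i =
      C (R := F) (b i : F) * X ^ s i * phiPS p F (μ (i - 1)) - C (R := F) (a i : F) * X ^ r i * μ i := by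
  simp only [Dmap, LinearMap.pi_apply, LinearMap.sub_apply, LinearMap.comp_apply,
    LinearMap.mulLeft_apply, LinearMap.proj_apply]

lemma ker_coeff_eq (p : ℕ) (F : Type) [Field F] (f : ℕ) (r s : ZMod f → ℕ)
    (a b : ZMod f → Fˣ) (μ : ZMod f → PowerSeries F) (hker : Dmap p F f r s a b μ = 0)
    (i : ZMod f) (N : ℕ) :
    (if s i ≤ N ∧ p ∣ N - s i then (b i : F) * coeff (R := F) ((N - s i) / p) (μ (i-1)) else 0)
      = (if r i ≤ N then (a i : F) * coeff (R := F) (N - r i) (μ i) else 0) := by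
  have h := congrFun hker i
  rw [Dmap_apply, Pi.zero_apply, sub_eq_zero] at h
  have h2 := congrArg (coeff (R := F) N) h
  rw [mul_comm (C (R := F) (b i : F)) (X ^ s i), mul_assoc, mul_comm (C (R := F) (a i : F)) (X ^ r i),
    mul_assoc, coeff_X_pow_mul', coeff_X_pow_mul'] at h2
  simp only [coeff_C_mul, coeff_phiPS, mul_ite, mul_zero] at h2
  rw [← h2]
  by_cases h1 : s i ≤ N
  · by_cases h3 : p ∣ N - s i
    · rw [if_pos ⟨h1, h3⟩, if_pos h1, if_pos h3]
    · rw [if_neg (by tauto), if_pos h1, if_neg h3]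
  · rw [if_neg (by tauto), if_neg h1]

lemma kernel_struct (p : ℕ) (hp : 0 < p) (F : Type) [Field F] (f : ℕ) [NeZero f]
    (r s : ZMod f → ℕ) (a b : ZMod f → Fˣ) (μ : ZMod f → PowerSeries F)
    (hker : Dmap p F f r s a b μ = 0) (hne : μ ≠ 0) :
    ∃ w : ZMod f → ℕ,
      (∀ i, coeff (R := F) (w i) (μ i) ≠ 0) ∧
      (∀ i, r i + w i = s i + p * w (i - 1)) ∧
      (∀ i, (a i : F) * coeff (R := F) (w i) (μ i) = (b i : F) * coeff (R := F) (w (i-1)) (μ (i-1))) := by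
  classical
  have hCne : ∀ x : Fˣ, C (R := F) (x : F) ≠ 0 := fun x h =>
    x.ne_zero (by simpa using congrArg (constantCoeff (R := F)) h)
  have hiff : ∀ i : ZMod f, μ i = 0 ↔ μ (i - 1) = 0 := by
    intro i
    have h := congrFun hker i
    rw [Dmap_apply, Pi.zero_apply, sub_eq_zero] at h
    constructor
    · intro h0
      rw [h0, mul_zero] at h
      rcases mul_eq_zero.1 h with h1 | h1
      · exact absurd (mul_eq_zero.1 h1)
          (by push_neg; exact ⟨hCne (b i), pow_ne_zero _ X_ne_zero⟩)
      · exact (phiPS_eq_zero_iff p hp F _).1 h1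
    · intro h0
      rw [h0, (phiPS_eq_zero_iff p hp F _).2 rfl, mul_zero] at h
      rcases mul_eq_zero.1 h.symm with h1 | h1
      · exact absurd (mul_eq_zero.1 h1)
          (by push_neg; exact ⟨hCne (a i), pow_ne_zero _ X_ne_zero⟩)
      · exact h1
  obtain ⟨i₀, hi₀⟩ : ∃ i₀, μ i₀ ≠ 0 := by
    by_contra hcon
    push_neg at hcon
    exact hne (funext fun i => hcon i)
  have hnz : ∀ i : ZMod f, μ i ≠ 0 := by
    have key : ∀ k : ℕ, μ (i₀ - (k : ZMod f)) ≠ 0 := by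
      intro k
      induction k with
      | zero => simpa using hi₀
      | succ k ih =>
        have : (i₀ - ((k+1 : ℕ) : ZMod f)) = (i₀ - (k : ZMod f)) - 1 := by
          push_cast; ring
        rw [this]
        exact fun h0 => ih ((hiff _).2 h0)
    intro i
    have : i₀ - ((i₀ - i).val : ZMod f) = i := by
      rw [ZMod.natCast_zmod_val]; ring
    simpa [this] using key (i₀ - i).val
  have hex : ∀ i : ZMod f, ∃ n, coeff (R := F) n (μ i) ≠ 0 := by
    intro i
    by_contra hcon
    push_neg at hcon
    exact hnz i (PowerSeries.ext fun n => by simpa using hcon n)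
  set w : ZMod f → ℕ := fun i => Nat.find (hex i) with hwdef
  have hspec : ∀ i, coeff (R := F) (w i) (μ i) ≠ 0 := fun i => Nat.find_spec (hex i)
  have hmin : ∀ i n, coeff (R := F) n (μ i) ≠ 0 → w i ≤ n := fun i n h => Nat.find_min' (hex i) h
  have hrel : ∀ i, r i + w i = s i + p * w (i - 1) := by
    intro i
    have hle1 : r i + w i ≤ s i + p * w (i - 1) := by
      have h := ker_coeff_eq p F f r s a b μ hker i (s i + p * w (i-1))
      rw [if_pos ⟨by omega, by simp [Nat.add_sub_cancel_left]⟩] at h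
      rw [Nat.add_sub_cancel_left, Nat.mul_div_cancel_left _ hp] at h
      have hL : (b i : F) * coeff (R := F) (w (i-1)) (μ (i-1)) ≠ 0 :=
        mul_ne_zero (by simpa using (b i).ne_zero) (hspec (i-1))
      rw [h] at hL
      by_cases h1 : r i ≤ s i + p * w (i-1)
      · rw [if_pos h1] at hL
        have := hmin i _ (fun h0 => hL (by rw [h0, mul_zero]))
        omega
      · rw [if_neg h1] at hL; exact absurd rfl hL
    have hle2 : s i + p * w (i - 1) ≤ r i + w i := by
      have h := ker_coeff_eq p F f r s a b μ hker i (r i + w i)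
      rw [if_pos (by omega : r i ≤ r i + w i), Nat.add_sub_cancel_left] at h
      have hR : (a i : F) * coeff (R := F) (w i) (μ i) ≠ 0 :=
        mul_ne_zero (by simpa using (a i).ne_zero) (hspec i)
      rw [← h] at hR
      by_cases h1 : s i ≤ r i + w i ∧ p ∣ r i + w i - s i
      · rw [if_pos h1] at hR
        have h2 := hmin (i-1) _ (fun h0 => hR (by rw [h0, mul_zero]))
        obtain ⟨t, ht⟩ := h1.2
        rw [ht, Nat.mul_div_cancel_left _ hp] at h2
        have h3 : p * w (i-1) ≤ p * t := Nat.mul_le_mul_left p h2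
        have := h1.1
        omega
      · rw [if_neg h1] at hR; exact absurd rfl hR
    omega
  refine ⟨w, hspec, hrel, fun i => ?_⟩
  have h := ker_coeff_eq p F f r s a b μ hker i (r i + w i)
  rw [if_pos (by omega : r i ≤ r i + w i), Nat.add_sub_cancel_left,
    if_pos ⟨by rw [hrel]; exact Nat.le_add_right _ _,
      by rw [hrel]; simp [Nat.add_sub_cancel_left]⟩] at h
  rw [← h, hrel, Nat.add_sub_cancel_left, Nat.mul_div_cancel_left _ hp]

lemma tele_sum (p f : ℕ) [NeZero f] (r w : ZMod f → ℕ) (s' : ZMod f → ℕ)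
    (hrel : ∀ i, r i + w i = s' i + p * w (i - 1)) (i : ZMod f) :
    (∑ j ∈ Finset.range f, p ^ j * r (i - (j : ZMod f))) + w i
      = (∑ j ∈ Finset.range f, p ^ j * s' (i - (j : ZMod f))) + p ^ f * w i := by
  have key : ∀ j : ℕ, p ^ j * r (i - (j : ZMod f)) + p ^ j * w (i - (j : ZMod f))
      = p ^ j * s' (i - (j : ZMod f)) + p ^ (j+1) * w (i - ((j+1 : ℕ) : ZMod f)) := by
    intro j
    have h := hrel (i - (j : ZMod f))
    have hidx : i - (j : ZMod f) - 1 = i - ((j+1 : ℕ) : ZMod f) := by push_cast; ring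
    rw [hidx] at h
    calc p ^ j * r (i - (j : ZMod f)) + p ^ j * w (i - (j : ZMod f))
        = p ^ j * (r (i - (j : ZMod f)) + w (i - (j : ZMod f))) := by ring
      _ = p ^ j * (s' (i - (j : ZMod f)) + p * w (i - ((j+1 : ℕ) : ZMod f))) := by rw [h]
      _ = _ := by ring
  have hsum := Finset.sum_congr rfl (fun j (_ : j ∈ Finset.range f) => key j)
  rw [Finset.sum_add_distrib, Finset.sum_add_distrib] at hsum
  have h1 : ∑ j ∈ Finset.range f, p ^ (j+1) * w (i - ((j+1 : ℕ) : ZMod f)) + w i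
      = (∑ j ∈ Finset.range f, p ^ j * w (i - (j : ZMod f))) + p ^ f * w i := by
    have := Finset.sum_range_succ' (fun j => p ^ j * w (i - (j : ZMod f))) f
    have h2 := Finset.sum_range_succ (fun j => p ^ j * w (i - (j : ZMod f))) f
    rw [h2] at this
    have hif : i - ((f : ℕ) : ZMod f) = i := by
      rw [ZMod.natCast_self]; ring
    simp only [Nat.cast_zero, pow_zero, one_mul, sub_zero, hif] at this
    omega
  omega

lemma tele_shift (p f : ℕ) [NeZero f] (r : ZMod f → ℕ) (i : ZMod f) :
    p * (∑ j ∈ Finset.range f, p ^ j * r (i - 1 - (j : ZMod f))) + r i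
      = (∑ j ∈ Finset.range f, p ^ j * r (i - (j : ZMod f))) + p ^ f * r i := by
  have h1 : p * (∑ j ∈ Finset.range f, p ^ j * r (i - 1 - (j : ZMod f)))
      = ∑ j ∈ Finset.range f, p ^ (j+1) * r (i - ((j+1 : ℕ) : ZMod f)) := by
    rw [Finset.mul_sum]
    refine Finset.sum_congr rfl fun j _ => ?_
    have hidx : i - 1 - (j : ZMod f) = i - ((j+1 : ℕ) : ZMod f) := by push_cast; ring
    rw [hidx]; ring
  rw [h1]
  have h2 := Finset.sum_range_succ' (fun j => p ^ j * r (i - (j : ZMod f))) f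
  have h3 := Finset.sum_range_succ (fun j => p ^ j * r (i - (j : ZMod f))) f
  rw [h3] at h2
  have hif : i - ((f : ℕ) : ZMod f) = i := by rw [ZMod.natCast_self]; ring
  simp only [Nat.cast_zero, pow_zero, one_mul, sub_zero, hif] at h2
  omega

lemma tele_cast (p f q : ℕ) [NeZero f] (r : ZMod f → ℕ) (γ : ZMod f → ZMod q)
    (h : ∀ i, (p : ZMod q) * γ (i - 1) = γ i + (r i : ZMod q)) (i : ZMod f) :
    ((∑ j ∈ Finset.range f, p ^ j * r (i - (j : ZMod f)) : ℕ) : ZMod q)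
      = (p : ZMod q) ^ f * γ i - γ i := by
  have key : ∀ j : ℕ, ((p ^ j * r (i - (j : ZMod f)) : ℕ) : ZMod q)
      = (p : ZMod q) ^ (j+1) * γ (i - ((j+1 : ℕ) : ZMod f))
        - (p : ZMod q) ^ j * γ (i - (j : ZMod f)) := by
    intro j
    have hidx : i - (j : ZMod f) - 1 = i - ((j+1 : ℕ) : ZMod f) := by push_cast; ring
    have hj := h (i - (j : ZMod f))
    rw [hidx] at hj
    rw [eq_sub_iff_add_eq, Nat.cast_mul, Nat.cast_pow]
    calc (p:ZMod q) ^ j * (r (i - (j:ZMod f)) : ZMod q) + (p:ZMod q) ^ j * γ (i - (j:ZMod f))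
        = (p:ZMod q) ^ j * (γ (i - (j:ZMod f)) + (r (i - (j:ZMod f)) : ZMod q)) := by ring
      _ = (p:ZMod q) ^ j * ((p:ZMod q) * γ (i - ((j+1:ℕ) : ZMod f))) := by rw [← hj]
      _ = _ := by ring
  rw [Nat.cast_sum]
  calc ∑ j ∈ Finset.range f, ((p ^ j * r (i - (j : ZMod f)) : ℕ) : ZMod q)
      = ∑ j ∈ Finset.range f, ((p : ZMod q) ^ (j+1) * γ (i - ((j+1 : ℕ) : ZMod f))
          - (p : ZMod q) ^ j * γ (i - (j : ZMod f))) :=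
        Finset.sum_congr rfl fun j _ => key j
    _ = (p : ZMod q) ^ f * γ (i - ((f : ℕ) : ZMod f)) - (p : ZMod q) ^ 0 * γ (i - ((0:ℕ) : ZMod f)) :=
        Finset.sum_range_sub (fun j => (p : ZMod q) ^ j * γ (i - ((j : ℕ) : ZMod f))) f
    _ = (p : ZMod q) ^ f * γ i - γ i := by
        simp [ZMod.natCast_self]

lemma prod_zmod {M : Type*} [CommMonoid M] (f : ℕ) [NeZero f] (g : ZMod f → M) :
    ∏ i : ZMod f, g i = ∏ k ∈ Finset.range f, g (k : ZMod f) := by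
  rw [← Fin.prod_univ_eq_prod_range (fun k => g (k : ZMod f)) f]
  refine (Fintype.prod_bijective (fun k : Fin f => ((k : ℕ) : ZMod f)) ?_ _ _ fun _ => rfl).symm
  rw [Fintype.bijective_iff_injective_and_card]
  refine ⟨fun x y hxy => Fin.ext ?_, by simp [ZMod.card]⟩
  have hxy' : ((x : ℕ) : ZMod f) = ((y : ℕ) : ZMod f) := hxy
  have hx := ZMod.val_cast_of_lt x.2
  have hy := ZMod.val_cast_of_lt y.2
  rw [← hx, ← hy, hxy']

lemma zmod_ind (f : ℕ) [NeZero f] (P : ZMod f → Prop) (h0 : P 0)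
    (hstep : ∀ k : ℕ, P (k : ZMod f) → P ((k+1 : ℕ) : ZMod f)) : ∀ i, P i := by
  intro i
  have key : ∀ k : ℕ, P (k : ZMod f) := by
    intro k
    induction k with
    | zero => simpa using h0
    | succ k ih => exact hstep k ih
  have := key i.val
  rwa [ZMod.natCast_zmod_val] at this

lemma lambda_exists (F : Type) [Field F] (f : ℕ) [NeZero f] (a b : ZMod f → Fˣ)
    (hab : ∏ i : ZMod f, a i = ∏ i : ZMod f, b i) :
    ∃ lam : ZMod f → Fˣ, lam 0 = 1 ∧ ∀ i, a i * lam i = b i * lam (i - 1) := by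
  set g : ℕ → Fˣ := fun k => (a (k : ZMod f))⁻¹ * b (k : ZMod f) with hg
  refine ⟨fun i => ∏ k ∈ Finset.range i.val, g (k+1), by simp [ZMod.val_zero], ?_⟩
  intro i
  beta_reduce
  by_cases hi : i = 0
  · subst hi
    simp only [ZMod.val_zero, Finset.range_zero, Finset.prod_empty, mul_one]
    have hf1 : 1 ≤ f := Nat.one_le_iff_ne_zero.2 (NeZero.ne f)
    have hneg : (0 : ZMod f) - 1 = ((f - 1 : ℕ) : ZMod f) := by
      rw [Nat.cast_sub hf1, ZMod.natCast_self]
      push_cast; ring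
    have hval : ((0 : ZMod f) - 1).val = f - 1 := by
      rw [hneg, ZMod.val_cast_of_lt (by omega)]
    rw [hval]
    have hprod : (∏ k ∈ Finset.range (f-1), g (k+1)) * g 0 = 1 := by
      have h1 := Finset.prod_range_succ' g (f - 1)
      rw [Nat.sub_add_cancel hf1] at h1
      have h2 : ∏ k ∈ Finset.range f, g k = ∏ i : ZMod f, ((a i)⁻¹ * b i) :=
        (prod_zmod f fun i => (a i)⁻¹ * b i).symm
      have h3 : ∏ i : ZMod f, ((a i)⁻¹ * b i)
          = (∏ i : ZMod f, a i)⁻¹ * ∏ i : ZMod f, b i := by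
        rw [Finset.prod_mul_distrib, Finset.prod_inv_distrib]
      rw [← h1, h2, h3, hab, inv_mul_cancel]
    have hP : (∏ k ∈ Finset.range (f-1), g (k+1)) = (g 0)⁻¹ :=
      eq_inv_of_mul_eq_one_left hprod
    rw [hP]
    have hg0 : g 0 = (a 0)⁻¹ * b 0 := by simp [hg]
    rw [hg0, mul_inv, inv_inv, mul_comm (a 0) (b 0)⁻¹, ← mul_assoc, mul_inv_cancel, one_mul]
  · have hk1 : 1 ≤ i.val := Nat.one_le_iff_ne_zero.2 fun h0 => hi ((ZMod.val_eq_zero i).1 h0)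
    have hklt : i.val < f := ZMod.val_lt i
    have hneg : i - 1 = ((i.val - 1 : ℕ) : ZMod f) := by
      rw [Nat.cast_sub hk1, ZMod.natCast_zmod_val]
      push_cast; ring
    have hval : (i - 1).val = i.val - 1 := by
      rw [hneg, ZMod.val_cast_of_lt (by omega)]
    rw [hval]
    have h1 : ∏ k ∈ Finset.range i.val, g (k+1)
        = (∏ k ∈ Finset.range (i.val - 1), g (k+1)) * g i.val := by
      have := Finset.prod_range_succ (fun k => g (k+1)) (i.val - 1)
      rw [Nat.sub_add_cancel hk1] at this
      exact this
    rw [h1]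
    have hgv : g i.val = (a i)⁻¹ * b i := by
      simp [hg, ZMod.natCast_zmod_val]
    rw [hgv]
    have hcomm : ∀ x y u : Fˣ, x * (y * (x⁻¹ * u)) = u * y := fun x y u => by
      rw [mul_left_comm y, ← mul_assoc, mul_inv_cancel, one_mul, mul_comm]
    exact hcomm (a i) _ (b i)

lemma CXmul_monomial (F : Type) [Field F] (x y : F) (k n : ℕ) :
    C (R := F) x * X ^ k * monomial (R := F) n y = monomial (R := F) (k + n) (x * y) := by
  ext N
  rw [mul_comm (C (R := F) x) (X ^ k), mul_assoc, coeff_X_pow_mul', coeff_monomial]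
  split_ifs with h1 h2 h2
  · rw [coeff_C_mul, coeff_monomial, if_pos (by omega)]
  · rw [coeff_C_mul, coeff_monomial, if_neg (by omega), mul_zero]
  · omega
  · rfl

set_option synthInstance.maxHeartbeats 1000000 in
set_option maxHeartbeats 2000000 in
/-- (a) `p^f − 1` divides `Σ_{j<f} p^j r_{i−j}` and `Σ_{j<f} p^j s_{i−j}`
for every `i`, so the quantities `α_i(r)`, `α_i(s)` are (natural) integers;
(b) `dim_F ker ∂ ≤ 1`;  (c) `ker ∂ ≠ 0` if and only if `Π a_i = Π b_i`,
`c_0 − α_0(r) = d_0 − α_0(s)` in `ℤ/m`, and `α_i(r) ≥ α_i(s)` for all `i`. -/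
theorem statement_13
    (p : ℕ) (hp : p.Prime) (F : Type) [Field F] [Fintype F] [CharP F p]
    (f e m : ℕ) [NeZero f] (he : 1 ≤ e) (hm1 : 1 ≤ m) (hm : p ^ f - 1 ∣ m)
    (e' : ℕ) (he' : e' = e * m)
    (r : ZMod f → ℕ) (a : ZMod f → Fˣ) (c : ZMod f → ZMod m)
    (hr : ∀ i, r i ≤ e') (hc : ∀ i, (p : ZMod m) * c (i - 1) = c i + (r i : ZMod m))
    (s : ZMod f → ℕ) (b : ZMod f → Fˣ) (d : ZMod f → ZMod m)
    (hs : ∀ i, s i ≤ e') (hd : ∀ i, (p : ZMod m) * d (i - 1) = d i + (s i : ZMod m)) :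
    let C0 := Ctuples F f m fun i => c i - d i
    let D := Dmap p F f r s a b
    let Kr : Submodule F ↥C0 := Submodule.comap C0.subtype (LinearMap.ker D)
    let αr : ZMod f → ℕ := fun i =>
      (∑ j ∈ Finset.range f, p ^ j * r (i - (j : ZMod f))) / (p ^ f - 1)
    let αs : ZMod f → ℕ := fun i =>
      (∑ j ∈ Finset.range f, p ^ j * s (i - (j : ZMod f))) / (p ^ f - 1)
    ((∀ i : ZMod f, p ^ f - 1 ∣ ∑ j ∈ Finset.range f, p ^ j * r (i - (j : ZMod f))) ∧
      (∀ i : ZMod f, p ^ f - 1 ∣ ∑ j ∈ Finset.range f, p ^ j * s (i - (j : ZMod f)))) ∧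
    Module.rank F ↥Kr ≤ 1 ∧
    (Kr ≠ ⊥ ↔
      ((∏ i : ZMod f, a i) = (∏ i : ZMod f, b i) ∧
        c 0 - (αr 0 : ZMod m) = d 0 - (αs 0 : ZMod m) ∧
        ∀ i : ZMod f, αs i ≤ αr i)) := by
  intro C0 D Kr αr αs
  have hppos : 0 < p := hp.pos
  have hpow1 : 1 ≤ p ^ f := Nat.one_le_pow _ _ hppos
  have hpow2 : 2 ≤ p ^ f := by
    have h1 : p ^ 1 ≤ p ^ f := Nat.pow_le_pow_right hppos (NeZero.one_le)
    rw [pow_one] at h1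
    have := hp.two_le
    omega
  set q1 : ℕ := p ^ f - 1 with hq1
  have hq1pos : 0 < q1 := by omega
  have hpf : p ^ f = q1 + 1 := by omega
  -- part (a)
  have hdiv : ∀ (t : ZMod f → ℕ) (γ : ZMod f → ZMod m),
      (∀ i, (p : ZMod m) * γ (i - 1) = γ i + (t i : ZMod m)) →
      ∀ i : ZMod f, q1 ∣ ∑ j ∈ Finset.range f, p ^ j * t (i - (j : ZMod f)) := by
    intro t γ hγ i
    set γ' : ZMod f → ZMod q1 := fun i => ZMod.castHom hm (ZMod q1) (γ i) with hγ'
    have hγ'' : ∀ i, (p : ZMod q1) * γ' (i - 1) = γ' i + (t i : ZMod q1) := by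
      intro i
      have := congrArg (ZMod.castHom hm (ZMod q1)) (hγ i)
      simpa [hγ', map_mul, map_add] using this
    have h := tele_cast p f q1 t γ' hγ'' i
    have hp1 : (p : ZMod q1) ^ f = 1 := by
      rw [← Nat.cast_pow, hpf]
      push_cast [ZMod.natCast_self]
      ring
    rw [hp1, one_mul, sub_self] at h
    exact (ZMod.natCast_eq_zero_iff _ _).1 h
  have hdivr := hdiv r c hc
  have hdivs := hdiv s d hd
  have hαr : ∀ i, q1 * αr i = ∑ j ∈ Finset.range f, p ^ j * r (i - (j : ZMod f)) :=
    fun i => Nat.mul_div_cancel' (hdivr i)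
  have hαs : ∀ i, q1 * αs i = ∑ j ∈ Finset.range f, p ^ j * s (i - (j : ZMod f)) :=
    fun i => Nat.mul_div_cancel' (hdivs i)
  -- structure of kernel elements
  have keyW : ∀ μ : ZMod f → PowerSeries F, Dmap p F f r s a b μ = 0 → μ ≠ 0 →
      ∃ w : ZMod f → ℕ,
        (∀ i, coeff (R := F) (w i) (μ i) ≠ 0) ∧
        (∀ i, αr i = αs i + w i) ∧
        (∀ i, (a i : F) * coeff (R := F) (w i) (μ i)
          = (b i : F) * coeff (R := F) (w (i-1)) (μ (i-1))) := by
    intro μ hker hne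
    obtain ⟨w, hw1, hw2, hw3⟩ := kernel_struct p hppos F f r s a b μ hker hne
    refine ⟨w, hw1, fun i => ?_, hw3⟩
    have h := tele_sum p f r w s hw2 i
    rw [← hαr i, ← hαs i, hpf] at h
    have h' : q1 * αr i + w i = (q1 * αs i + q1 * w i) + w i := by
      rw [h]; ring
    have h'' : q1 * αr i = q1 * (αs i + w i) := by
      have := Nat.add_right_cancel h'
      rw [this]; ring
    exact Nat.eq_of_mul_eq_mul_left hq1pos h''
  refine ⟨⟨hdivr, hdivs⟩, ?_, ?_, ?_⟩
  · -- rank bound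
    set v0 : ℕ := αr 0 - αs 0 with hv0
    set Φ : ↥Kr →ₗ[F] F :=
      (PowerSeries.coeff (R := F) v0).comp ((LinearMap.proj (0 : ZMod f)).comp
        (C0.subtype.comp Kr.subtype)) with hΦ
    have hker0 : ∀ x : ↥Kr, Φ x = 0 → x = 0 := by
      intro x hx
      by_contra hxne
      have hμne : (((x : ↥C0) : ZMod f → PowerSeries F)) ≠ 0 := by
        intro h0
        exact hxne (Subtype.ext (Subtype.ext h0))
      have hker : Dmap p F f r s a b ((x : ↥C0) : ZMod f → PowerSeries F) = 0 := by
        have := x.2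
        rw [Submodule.mem_comap, LinearMap.mem_ker] at this
        exact this
      obtain ⟨w, hw1, hw2, _⟩ := keyW _ hker hμne
      have hw0 : w 0 = v0 := by
        have := hw2 0
        omega
      have : Φ x = coeff (R := F) v0 (((x : ↥C0) : ZMod f → PowerSeries F) 0) := rfl
      rw [hx] at this
      exact hw1 0 (by rw [hw0]; exact this.symm)
    have hinj : Function.Injective Φ := by
      intro x y hxy
      have h1 : Φ (x - y) = 0 := by
        have := LinearMap.map_sub Φ x y
        rw [this, hxy, sub_self]
      have h2 := hker0 _ h1
      exact eq_of_sub_eq_zero h2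
    calc Module.rank F ↥Kr ≤ Module.rank F F := LinearMap.rank_le_of_injective Φ hinj
      _ = 1 := Module.rank_self F
  · -- forward direction
    intro hK
    obtain ⟨x, hxK, hxne⟩ := Submodule.ne_bot_iff Kr |>.1 hK
    have hker : Dmap p F f r s a b ((x : ZMod f → PowerSeries F)) = 0 := by
      rw [Submodule.mem_comap, LinearMap.mem_ker] at hxK
      exact hxK
    have hμne : ((x : ZMod f → PowerSeries F)) ≠ 0 := by
      intro h0
      exact hxne (Subtype.ext h0)
    obtain ⟨w, hw1, hw2, hw3⟩ := keyW _ hker hμne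
    have hC0mem : ∀ (i : ZMod f) (n : ℕ),
        coeff (R := F) n ((x : ZMod f → PowerSeries F) i) ≠ 0 → (n : ZMod m) = c i - d i := x.2
    constructor
    · -- products agree
      set ℓ : ZMod f → F := fun i => coeff (R := F) (w i) ((x : ZMod f → PowerSeries F) i) with hℓ
      have h6 : ∏ i : ZMod f, ((a i : F) * ℓ i) = ∏ i : ZMod f, ((b i : F) * ℓ (i-1)) :=
        Finset.prod_congr rfl fun i _ => hw3 i
      have h7 : ∏ i : ZMod f, ℓ (i-1) = ∏ i : ZMod f, ℓ i :=
        Fintype.prod_equiv (Equiv.subRight (1 : ZMod f)) _ _ fun i => rfl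
      rw [Finset.prod_mul_distrib, Finset.prod_mul_distrib, h7] at h6
      have hℓne : ∏ i : ZMod f, ℓ i ≠ 0 :=
        Finset.prod_ne_zero_iff.2 fun i _ => hw1 i
      have h8 : ∏ i : ZMod f, (a i : F) = ∏ i : ZMod f, (b i : F) :=
        mul_right_cancel₀ hℓne h6
      refine Units.ext ?_
      have hca : ((∏ i : ZMod f, a i : Fˣ) : F) = ∏ i : ZMod f, (a i : F) :=
        map_prod (Units.coeHom F) a Finset.univ
      have hcb : ((∏ i : ZMod f, b i : Fˣ) : F) = ∏ i : ZMod f, (b i : F) :=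
        map_prod (Units.coeHom F) b Finset.univ
      rw [hca, hcb]
      exact h8
    constructor
    · -- characters agree
      have hw0m : ((w 0 : ℕ) : ZMod m) = c 0 - d 0 := hC0mem 0 (w 0) (hw1 0)
      have hcast : ((αr 0 : ℕ) : ZMod m) = ((αs 0 : ℕ) : ZMod m) + ((w 0 : ℕ) : ZMod m) := by
        rw [← Nat.cast_add]
        exact congrArg _ (hw2 0)
      rw [hcast, hw0m]
      ring
    · -- inequalities
      intro i
      have := hw2 i
      omega
  · -- backward direction
    rintro ⟨hab, hcong0, hineq⟩
    set w : ZMod f → ℕ := fun i => αr i - αs i with hwdef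
    have hw : ∀ i, αr i = αs i + w i := by
      intro i
      have := hineq i
      simp only [hwdef]
      omega
    have hrec : ∀ (t : ZMod f → ℕ) (αt : ZMod f → ℕ),
        (∀ i, q1 * αt i = ∑ j ∈ Finset.range f, p ^ j * t (i - (j : ZMod f))) →
        ∀ i, p * αt (i-1) = αt i + t i := by
      intro t αt hαt i
      have h := tele_shift p f t i
      rw [← hαt (i-1), ← hαt i] at h
      have h' : q1 * (p * αt (i-1)) + t i = q1 * (αt i + t i) + t i := by
        calc q1 * (p * αt (i-1)) + t i = p * (q1 * αt (i-1)) + t i := by ring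
          _ = q1 * αt i + p ^ f * t i := h
          _ = q1 * (αt i + t i) + t i := by rw [hpf]; ring
      exact Nat.eq_of_mul_eq_mul_left hq1pos (Nat.add_right_cancel h')
    have hrecr := hrec r αr hαr
    have hrecs := hrec s αs hαs
    have hrel : ∀ i, r i + w i = s i + p * w (i-1) := by
      intro i
      have h1 := hrecr i
      have h2 := hrecs i
      have h3 := hw i
      have h4 := hw (i-1)
      have h5 : p * αr (i-1) = p * αs (i-1) + p * w (i-1) := by rw [h4]; ring
      omega
    -- congruences at every index
    have hcong : ∀ i : ZMod f, ((w i : ℕ) : ZMod m) = c i - d i := by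
      refine zmod_ind f _ ?_ ?_
      · have hcast : ((αr 0 : ℕ) : ZMod m) = ((αs 0 : ℕ) : ZMod m) + ((w 0 : ℕ) : ZMod m) := by
          rw [← Nat.cast_add]
          exact congrArg _ (hw 0)
        linear_combination (-1 : ZMod m) * hcast - hcong0
      · intro k ih
        set i : ZMod f := ((k+1 : ℕ) : ZMod f) with hi
        have hi1 : i - 1 = (k : ZMod f) := by rw [hi]; push_cast; ring
        have hA : ((r i : ℕ) : ZMod m) + ((w i : ℕ) : ZMod m)
            = ((s i : ℕ) : ZMod m) + (p : ZMod m) * ((w (i-1) : ℕ) : ZMod m) := by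
          have := congrArg (Nat.cast : ℕ → ZMod m) (hrel i)
          push_cast at this
          exact_mod_cast this
        have hB := hc i
        have hC := hd i
        have hD : ((w (i-1) : ℕ) : ZMod m) = c (i-1) - d (i-1) := by
          rw [hi1]; exact ih
        have goal : ((w i : ℕ) : ZMod m) = c i - d i := by
          linear_combination hA + hB - hC + (p : ZMod m) * hD
        exact goal
    obtain ⟨lam, hlam0, hlam⟩ := lambda_exists F f a b hab
    set μ : ZMod f → PowerSeries F := fun i => monomial (R := F) (w i) ((lam i : F)) with hμ
    have hC0mem : μ ∈ C0 := by
      intro i n hn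
      rw [hμ] at hn
      simp only [coeff_monomial] at hn
      by_cases h : n = w i
      · rw [h]; exact hcong i
      · rw [if_neg h] at hn; exact absurd rfl hn
    have hker : Dmap p F f r s a b μ = 0 := by
      funext i
      rw [Dmap_apply, Pi.zero_apply, sub_eq_zero]
      have h1 : phiPS p F (μ (i-1)) = monomial (R := F) (p * w (i-1)) ((lam (i-1) : F)) := by
        rw [hμ]
        exact phiPS_monomial p hppos F _ _
      rw [h1, hμ, CXmul_monomial, CXmul_monomial]
      have hdeg : s i + p * w (i-1) = r i + w i := (hrel i).symm
      have hcoeff : (b i : F) * (lam (i-1) : F) = (a i : F) * (lam i : F) := by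
        have := congrArg (Units.val) (hlam i)
        simpa [Units.val_mul] using this.symm
      rw [hdeg, hcoeff]
    rw [Submodule.ne_bot_iff]
    refine ⟨⟨μ, hC0mem⟩, ?_, ?_⟩
    · rw [Submodule.mem_comap, LinearMap.mem_ker]
      exact hker
    · intro h0
      have hμ0 : μ 0 = 0 := by
        have := congrArg (Subtype.val) h0
        exact congrFun this 0
      have : coeff (R := F) (w 0) (μ 0) = (lam 0 : F) := by
        rw [hμ]
        simp [coeff_monomial]
      rw [hμ0, hlam0] at this
      simp at this
end
end

section
/- Let (r,a,c) and (s,b,d) be two rank one data. Then there exists a tuple (μ_i)_{i∈Z/fZ} of units of F[[u]] such that every nonzero coefficient of μ_i occurs in a degree n with n ≡ c_i − d_i (mod m), and such that b_i·u^{s_i}·φ(μ_{i−1}) = a_i·u^{r_i}·μ_i for all i, if and only if r_i = s_i and c_i = d_i for all i and Π_{i=0}^{f−1} a_i = Π_{i=0}^{f−1} b_i. (Such a tuple is exactly an isomorphism M(r,a,c) ≅ M(s,b,d) of Breuil–Kisin modules with descent data; this is the uniqueness statement in the paper's classification of rank one Breuil–Kisin modules of height at most one with descent data.) -/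
open PowerSeries

noncomputable section

private lemma phiPS_C_eq (p : ℕ) (hp : 0 < p) (F : Type) [CommRing F] (t : F) :
    phiPS p F (PowerSeries.C (R := F) t) = PowerSeries.C (R := F) t := by
  ext n
  simp only [phiPS, LinearMap.coe_mk, AddHom.coe_mk, PowerSeries.coeff_mk]
  rcases Nat.eq_zero_or_pos n with h0 | h0
  · subst h0; simp
  · by_cases hdvd : p ∣ n
    · have hnp : 0 < n / p := Nat.div_pos (Nat.le_of_dvd h0 hdvd) hp
      rw [if_pos hdvd, PowerSeries.coeff_C, PowerSeries.coeff_C,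
        if_neg hnp.ne', if_neg h0.ne']
    · rw [if_neg hdvd, PowerSeries.coeff_C, if_neg h0.ne']

private lemma phiPS_constantCoeff (p : ℕ) (F : Type) [CommRing F] (g : PowerSeries F) :
    PowerSeries.constantCoeff (R := F) (phiPS p F g) = PowerSeries.constantCoeff (R := F) g := by
  rw [← PowerSeries.coeff_zero_eq_constantCoeff]
  simp [phiPS]

private lemma coeff_CXpow_mul {F : Type} [CommRing F] (t : F) (k n : ℕ) (g : PowerSeries F) :
    PowerSeries.coeff (R := F) n (PowerSeries.C (R := F) t * PowerSeries.X ^ k * g) =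
      if k ≤ n then t * PowerSeries.coeff (R := F) (n - k) g else 0 := by
  rw [mul_comm (PowerSeries.C (R := F) t) (PowerSeries.X ^ k), mul_assoc, mul_comm,
    PowerSeries.coeff_mul_X_pow']
  split_ifs with h
  · rw [PowerSeries.coeff_C_mul]
  · rfl

private lemma prod_range_eq_prod_univ {M : Type} [CommMonoid M] (f : ℕ) [NeZero f]
    (q : ZMod f → M) : ∏ j ∈ Finset.range f, q (j : ZMod f) = ∏ i : ZMod f, q i := by
  refine Finset.prod_nbij' (fun j => (j : ZMod f)) (fun i => i.val) ?_ ?_ ?_ ?_ ?_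
  · intro a _; exact Finset.mem_univ _
  · intro i _; exact Finset.mem_range.mpr (ZMod.val_lt i)
  · intro j hj; exact ZMod.val_cast_of_lt (Finset.mem_range.mp hj)
  · intro i _; exact ZMod.natCast_rightInverse i
  · intro j _; rfl

/-- There is a tuple `(μ_i)` of units of `F⟦u⟧`, with all nonzero
coefficients of `μ_i` in degrees `≡ c_i − d_i (mod m)`, satisfying
`b_i u^{s_i} φ(μ_{i−1}) = a_i u^{r_i} μ_i` for all `i` (i.e. an isomorphism
`𝔐(r,a,c) ≅ 𝔐(s,b,d)`), if and only if `r_i = s_i` and `c_i = d_i` for all `i`, and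
`Π a_i = Π b_i`. -/
theorem statement_14
    (p : ℕ) (hp : p.Prime) (F : Type) [Field F] [Fintype F] [CharP F p]
    (f e m : ℕ) [NeZero f] (he : 1 ≤ e) (hm1 : 1 ≤ m) (hm : p ^ f - 1 ∣ m)
    (e' : ℕ) (he' : e' = e * m)
    (r : ZMod f → ℕ) (a : ZMod f → Fˣ) (c : ZMod f → ZMod m)
    (hr : ∀ i, r i ≤ e') (hc : ∀ i, (p : ZMod m) * c (i - 1) = c i + (r i : ZMod m))
    (s : ZMod f → ℕ) (b : ZMod f → Fˣ) (d : ZMod f → ZMod m)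
    (hs : ∀ i, s i ≤ e') (hd : ∀ i, (p : ZMod m) * d (i - 1) = d i + (s i : ZMod m)) :
    (∃ μ : ZMod f → PowerSeries F,
      (∀ i, IsUnit (μ i)) ∧
      (∀ (i : ZMod f) (n : ℕ),
        PowerSeries.coeff (R := F) n (μ i) ≠ 0 → (n : ZMod m) = c i - d i) ∧
      (∀ i : ZMod f,
        PowerSeries.C (R := F) (b i : F) * PowerSeries.X ^ s i * phiPS p F (μ (i - 1)) =
          PowerSeries.C (R := F) (a i : F) * PowerSeries.X ^ r i * μ i)) ↔
    ((∀ i, r i = s i ∧ c i = d i) ∧ (∏ i : ZMod f, a i) = ∏ i : ZMod f, b i) := by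
  have hp0 : 0 < p := hp.pos
  constructor
  · rintro ⟨μ, hunit, hcoef, heq⟩
    -- constant coefficients are nonzero
    set t : ZMod f → F := fun i => PowerSeries.constantCoeff (R := F) (μ i) with ht
    have htne : ∀ i, t i ≠ 0 := fun i =>
      ((PowerSeries.isUnit_iff_constantCoeff.mp (hunit i)).ne_zero)
    -- r = s and the constant-coefficient relation
    have key : ∀ i, r i = s i ∧ (b i : F) * t (i - 1) = (a i : F) * t i := by
      intro i
      have h1 := congrArg (PowerSeries.coeff (R := F) (s i)) (heq i)
      have h2 := congrArg (PowerSeries.coeff (R := F) (r i)) (heq i)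
      rw [coeff_CXpow_mul, coeff_CXpow_mul] at h1 h2
      rw [if_pos le_rfl, Nat.sub_self, PowerSeries.coeff_zero_eq_constantCoeff,
        phiPS_constantCoeff] at h1
      have hbt : (b i : F) * t (i - 1) ≠ 0 :=
        mul_ne_zero (b i).ne_zero (htne (i - 1))
      have hrs : r i ≤ s i := by
        by_contra hlt
        rw [if_neg hlt] at h1
        exact hbt h1
      rw [if_pos le_rfl, Nat.sub_self, PowerSeries.coeff_zero_eq_constantCoeff] at h2
      have hat : (a i : F) * t i ≠ 0 := mul_ne_zero (a i).ne_zero (htne i)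
      have hsr : s i ≤ r i := by
        by_contra hlt
        rw [if_neg hlt] at h2
        exact hat h2.symm
      have hreq : r i = s i := le_antisymm hrs hsr
      refine ⟨hreq, ?_⟩
      rw [if_pos hrs, hreq, Nat.sub_self, PowerSeries.coeff_zero_eq_constantCoeff] at h1
      exact h1
    refine ⟨fun i => ⟨(key i).1, ?_⟩, ?_⟩
    · have hne0 : PowerSeries.coeff (R := F) 0 (μ i) ≠ 0 := by
        rw [PowerSeries.coeff_zero_eq_constantCoeff]; exact htne i
      have h1 := hcoef i 0 hne0
      rw [Nat.cast_zero] at h1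
      exact sub_eq_zero.mp h1.symm
    · -- product relation
      have hProd : (∏ i : ZMod f, ((b i : F) * t (i - 1))) =
          ∏ i : ZMod f, ((a i : F) * t i) :=
        Finset.prod_congr rfl fun i _ => (key i).2
      rw [Finset.prod_mul_distrib, Finset.prod_mul_distrib] at hProd
      have hshift : (∏ i : ZMod f, t (i - 1)) = ∏ i : ZMod f, t i :=
        Equiv.prod_comp (Equiv.subRight (1 : ZMod f)) t
      rw [hshift] at hProd
      have hTne : (∏ i : ZMod f, t i) ≠ 0 :=
        Finset.prod_ne_zero_iff.mpr fun i _ => htne i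
      have hval : (∏ i : ZMod f, (a i : F)) = ∏ i : ZMod f, (b i : F) :=
        (mul_right_cancel₀ hTne hProd).symm
      apply Units.ext
      exact (map_prod (Units.coeHom F) a Finset.univ).trans
        (hval.trans (map_prod (Units.coeHom F) b Finset.univ).symm)
  · rintro ⟨hrs, hab⟩
    -- construct constant solutions
    set q : ZMod f → Fˣ := fun i => b i * (a i)⁻¹ with hq
    have hqprod : (∏ i : ZMod f, q i) = 1 := by
      have h1 : (∏ i : ZMod f, q i) =
          (∏ i : ZMod f, b i) * (∏ i : ZMod f, a i)⁻¹ := by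
        rw [hq, Finset.prod_mul_distrib, Finset.prod_inv_distrib]
      rw [h1, ← hab]
      simp
    set lam : ZMod f → Fˣ := fun i => ∏ j ∈ Finset.range i.val, q ((j : ZMod f) + 1)
      with hlam
    have hrec : ∀ i : ZMod f, lam i = q i * lam (i - 1) := by
      intro i
      by_cases h0 : i = 0
      · subst h0
        have hv0 : (0 : ZMod f).val = 0 := ZMod.val_zero
        have hvm : (0 - 1 : ZMod f).val = f - 1 := by
          have : (0 - 1 : ZMod f) = ((f - 1 : ℕ) : ZMod f) := by
            have hf1 : 1 ≤ f := Nat.one_le_iff_ne_zero.mpr (NeZero.ne f)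
            push_cast [Nat.cast_sub hf1]
            simp
          rw [this]
          exact ZMod.val_cast_of_lt (Nat.sub_lt (Nat.pos_of_ne_zero (NeZero.ne f))
            Nat.one_pos)
        simp only [hlam, hv0, hvm, Finset.range_zero, Finset.prod_empty]
        have hf1 : f = (f - 1) + 1 :=
          (Nat.succ_pred_eq_of_pos (Nat.pos_of_ne_zero (NeZero.ne f))).symm
        have hfull : (∏ j ∈ Finset.range ((f - 1) + 1), q (j : ZMod f)) = 1 := by
          rw [← hf1, prod_range_eq_prod_univ f q]; exact hqprod
        rw [Finset.prod_range_succ'] at hfull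
        simp only [Nat.cast_zero] at hfull
        have hcast : (∏ j ∈ Finset.range (f - 1), q ((j : ZMod f) + 1)) =
            ∏ j ∈ Finset.range (f - 1), q (((j + 1 : ℕ) : ZMod f)) :=
          Finset.prod_congr rfl fun j _ => by congr 1; push_cast; ring
        symm
        rw [mul_comm, hcast]
        exact hfull
      · -- i ≠ 0
        have hval : 1 ≤ i.val := by
          rcases Nat.eq_zero_or_pos i.val with h | h
          · exfalso
            apply h0
            have hri : ((i.val : ℕ) : ZMod f) = i := ZMod.natCast_rightInverse i
            rw [h, Nat.cast_zero] at hri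
            exact hri.symm
          · exact h
        have him : i = ((i.val : ℕ) : ZMod f) := (ZMod.natCast_rightInverse i).symm
        have hsub : (i - 1 : ZMod f) = ((i.val - 1 : ℕ) : ZMod f) := by
          rw [Nat.cast_sub hval, Nat.cast_one, ← him]
        have hvsub : (i - 1 : ZMod f).val = i.val - 1 := by
          rw [hsub]
          exact ZMod.val_cast_of_lt (lt_of_le_of_lt (Nat.sub_le _ _) (ZMod.val_lt i))
        have hiv : i.val = (i.val - 1) + 1 := (Nat.succ_pred_eq_of_pos hval).symm
        simp only [hlam, hvsub]
        rw [hiv, Finset.prod_range_succ, mul_comm]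
        congr 1
        have hc1 : ((i.val - 1 : ℕ) : ZMod f) + 1 = ((i.val - 1 + 1 : ℕ) : ZMod f) := by
          push_cast; ring
        rw [hc1, ← hiv, ← him]
    refine ⟨fun i => PowerSeries.C (R := F) (lam i : F), ?_, ?_, ?_⟩
    · intro i
      exact ((lam i).isUnit).map (PowerSeries.C (R := F))
    · intro i n hn
      rw [PowerSeries.coeff_C] at hn
      have hn0 : n = 0 := by by_contra h; rw [if_neg h] at hn; exact hn rfl
      subst hn0
      rw [Nat.cast_zero, (hrs i).2, sub_self]
    · intro i
      rw [phiPS_C_eq p hp0 F, (hrs i).1]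
      have hcoefeq : (b i : F) * (lam (i - 1) : F) = (a i : F) * (lam i : F) := by
        have h := congrArg (fun x : Fˣ => (x : F)) (hrec i)
        simp only [hq, Units.val_mul, Units.val_inv_eq_inv_val] at h
        rw [h]
        field_simp
      calc PowerSeries.C (R := F) (b i : F) * PowerSeries.X ^ s i *
            PowerSeries.C (R := F) (lam (i - 1) : F)
          = PowerSeries.C (R := F) ((b i : F) * (lam (i - 1) : F)) * PowerSeries.X ^ s i := by
            rw [map_mul]; ring
        _ = PowerSeries.C (R := F) ((a i : F) * (lam i : F)) * PowerSeries.X ^ s i := by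
            rw [hcoefeq]
        _ = PowerSeries.C (R := F) (a i : F) * PowerSeries.X ^ s i *
            PowerSeries.C (R := F) (lam i : F) := by
            rw [map_mul]; ring
end
end
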